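/- The integer solutions of (x+1)² + (x+2)² = y² are exactly those with 2x + 3 + y√2 = ±(1+√2)^(2r+1) for some integer r; equivalently, (2x+3)² − 2y² = −1 and all integer solutions (u, y) of u² − 2y² = −1 arise as u + y√2 = ±(1+√2)^(2r+1). -/

import Mathlib

open Pell Pell.Solution₁ Zsqrtd

noncomputable abbrev f2 : ℤ√2 →+* ℝ := Zsqrtd.toReal (by norm_num)

def E2 : (ℤ√2)ˣ where
  val := ⟨1, 1⟩
  inv := ⟨-1, 1⟩
  val_inv := by ext <;> simp [Zsqrtd.re_mul, Zsqrtd.im_mul]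
  inv_val := by ext <;> simp [Zsqrtd.re_mul, Zsqrtd.im_mul]

lemma f2_E2_zpow (k : ℤ) : f2 ((E2 ^ k : (ℤ√2)ˣ) : ℤ√2) = (1 + Real.sqrt 2) ^ k := by
  have h : ((Units.map (f2 : ℤ√2 →* ℝ) E2 : ℝˣ) : ℝ) = 1 + Real.sqrt 2 := by
    simp [E2, Zsqrtd.toReal_apply]
  calc f2 ((E2 ^ k : (ℤ√2)ˣ) : ℤ√2)
      = ((Units.map (f2 : ℤ√2 →* ℝ) (E2 ^ k) : ℝˣ) : ℝ) := rfl
    _ = (((Units.map (f2 : ℤ√2 →* ℝ) E2) ^ k : ℝˣ) : ℝ) := by rw [map_zpow]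
    _ = (1 + Real.sqrt 2) ^ k := by
        rw [Units.val_zpow_eq_zpow_val, h]

lemma norm_E2_zpow (r : ℤ) :
    Zsqrtd.norm ((E2 ^ (2 * r + 1) : (ℤ√2)ˣ) : ℤ√2) = -1 := by
  have h : Units.map (Zsqrtd.normMonoidHom : ℤ√2 →* ℤ) E2 = -1 := by
    ext; simp [E2, Zsqrtd.normMonoidHom, Zsqrtd.norm_def]
  have h0 : Zsqrtd.norm ((E2 ^ (2 * r + 1) : (ℤ√2)ˣ) : ℤ√2)
      = ((Units.map (Zsqrtd.normMonoidHom : ℤ√2 →* ℤ) (E2 ^ (2 * r + 1)) : ℤˣ) : ℤ) := rfl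
  rw [h0, map_zpow, h]
  have h1 : ((-1 : ℤˣ) ^ (2 * r + 1) : ℤˣ) = -1 := by
    rw [zpow_add, zpow_mul]
    have h2 : ((-1 : ℤˣ) ^ (2 : ℤ) : ℤˣ) = 1 := by decide
    rw [h2, one_zpow, one_mul, zpow_one]
  rw [h1]; rfl

lemma int_add_sqrt2_inj {a b c d : ℤ} (h : (a : ℝ) + b * Real.sqrt 2 = c + d * Real.sqrt 2) :
    a = c ∧ b = d := by
  have hbd : b = d := by
    by_contra hne
    apply irrational_sqrt_two
    have hbd0 : ((b : ℝ) - d) ≠ 0 := by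
      simpa using sub_ne_zero.mpr (fun hf : (b : ℝ) = d => hne (by exact_mod_cast hf))
    refine ⟨((c - a : ℤ) : ℚ) / ((b - d : ℤ) : ℚ), ?_⟩
    push_cast
    rw [div_eq_iff hbd0]
    ring_nf
    ring_nf at h
    linarith
  refine ⟨?_, hbd⟩
  have : (a : ℝ) = c := by
    rw [hbd] at h; linarith
  exact_mod_cast this

def sFund : Solution₁ 2 := Solution₁.mk 3 2 (by norm_num)

lemma sFund_isFund : Pell.IsFundamental sFund := by
  refine ⟨by norm_num [sFund], by norm_num [sFund], ?_⟩
  intro b hb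
  have hp := b.prop
  show (3 : ℤ) ≤ b.x
  by_contra hlt
  push_neg at hlt
  have hx : b.x = 2 := by omega
  rw [hx] at hp
  have h3 : 2 * b.y ^ 2 = 3 := by linarith
  set k := b.y ^ 2 with hk
  omega

lemma coe_sFund_zpow (n : ℤ) :
    ((sFund ^ n : Solution₁ 2) : ℤ√2) = ((E2 ^ (2 * n) : (ℤ√2)ˣ) : ℤ√2) := by
  have hG : Unitary.toUnits (sFund : unitary (ℤ√2)) = E2 ^ 2 := by
    refine Units.ext ?_
    show ((sFund : ℤ√2)) = ((E2 ^ 2 : (ℤ√2)ˣ) : ℤ√2)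
    ext <;> simp [sFund, E2, pow_two, Zsqrtd.re_mul, Zsqrtd.im_mul]
  calc ((sFund ^ n : Solution₁ 2) : ℤ√2)
      = ((Unitary.toUnits ((sFund ^ n : Solution₁ 2) : unitary (ℤ√2)) : (ℤ√2)ˣ) : ℤ√2) := rfl
    _ = (((Unitary.toUnits (sFund : unitary (ℤ√2))) ^ n : (ℤ√2)ˣ) : ℤ√2) := by
        exact congrArg Units.val (map_zpow Unitary.toUnits (sFund : unitary (ℤ√2)) n)
    _ = ((E2 ^ (2 * n) : (ℤ√2)ˣ) : ℤ√2) := by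
        rw [hG, ← zpow_natCast E2 2, ← zpow_mul]
        norm_num

lemma pell_neg_classify (u y : ℤ) :
    u ^ 2 - 2 * y ^ 2 = -1 ↔
      ∃ r : ℤ, (u : ℝ) + (y : ℝ) * Real.sqrt 2 = (1 + Real.sqrt 2) ^ (2 * r + 1) ∨
        (u : ℝ) + (y : ℝ) * Real.sqrt 2 = -((1 + Real.sqrt 2) ^ (2 * r + 1)) := by
  have hs2 : Real.sqrt 2 * Real.sqrt 2 = 2 := Real.mul_self_sqrt (by norm_num)
  have hpos : (0 : ℝ) < 1 + Real.sqrt 2 := by positivity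
  constructor
  · intro h
    have hsb : ((u + 2 * y) : ℤ) ^ 2 - 2 * ((u + y) : ℤ) ^ 2 = 1 := by linear_combination -h
    set sb : Solution₁ 2 := Solution₁.mk (u + 2 * y) (u + y) hsb with hsbdef
    obtain ⟨n, hn⟩ := sFund_isFund.eq_zpow_or_neg_zpow sb
    have hfsb : f2 (sb : ℤ√2) = ((u : ℝ) + y * Real.sqrt 2) * (1 + Real.sqrt 2) := by
      rw [hsbdef, Solution₁.coe_mk, Zsqrtd.toReal_apply]
      push_cast
      ring_nf
      rw [Real.sq_sqrt (by norm_num : (2:ℝ) ≥ 0)]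
      ring
    have hkey : (1 + Real.sqrt 2) ^ (2 * n) = (1 + Real.sqrt 2) ^ (2 * (n - 1) + 1) * (1 + Real.sqrt 2) := by
      rw [← zpow_add_one₀ hpos.ne']
      ring_nf
    refine ⟨n - 1, ?_⟩
    rcases hn with hn | hn
    · left
      have hcoe : (sb : ℤ√2) = ((E2 ^ (2 * n) : (ℤ√2)ˣ) : ℤ√2) := by
        rw [hn]; exact coe_sFund_zpow n
      have := congrArg f2 hcoe
      rw [hfsb, f2_E2_zpow, hkey] at this
      exact mul_right_cancel₀ hpos.ne' this
    · right
      have hcoe : (sb : ℤ√2) = -((E2 ^ (2 * n) : (ℤ√2)ˣ) : ℤ√2) := by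
        have hneg : ((-(sFund ^ n) : Solution₁ 2) : ℤ√2) = -((sFund ^ n : Solution₁ 2) : ℤ√2) := by
          exact Zsqrtd.ext (Solution₁.x_neg _) (Solution₁.y_neg _)
        rw [hn, hneg, coe_sFund_zpow n]
      have := congrArg f2 hcoe
      rw [hfsb, map_neg, f2_E2_zpow, hkey] at this
      have h2 : ((u : ℝ) + y * Real.sqrt 2) * (1 + Real.sqrt 2)
          = -(1 + Real.sqrt 2) ^ (2 * (n - 1) + 1) * (1 + Real.sqrt 2) := by
        rw [this]; ring
      have := mul_right_cancel₀ hpos.ne' h2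
      linarith [this]
  · rintro ⟨r, hr⟩
    set w := ((E2 ^ (2 * r + 1) : (ℤ√2)ˣ) : ℤ√2) with hw
    have hnorm : w.re * w.re - 2 * w.im * w.im = -1 := by
      have := norm_E2_zpow r
      rwa [Zsqrtd.norm_def] at this
    have hf : (w.re : ℝ) + w.im * Real.sqrt 2 = (1 + Real.sqrt 2) ^ (2 * r + 1) := by
      have := f2_E2_zpow (2 * r + 1)
      rwa [← hw, Zsqrtd.toReal_apply] at this
    rcases hr with hr | hr
    · rw [← hf] at hr
      obtain ⟨h1, h2⟩ := int_add_sqrt2_inj hr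
      rw [h1, h2]
      linear_combination hnorm
    · rw [← hf] at hr
      have hr' : (u : ℝ) + y * Real.sqrt 2 = ((-w.re : ℤ) : ℝ) + ((-w.im : ℤ) : ℝ) * Real.sqrt 2 := by
        push_cast
        linarith [hr]
      obtain ⟨h1, h2⟩ := int_add_sqrt2_inj hr'
      rw [h1, h2]
      linear_combination hnorm

/-- The integer solutions of `(x+1)² + (x+2)² = y²` are exactly those with
`2x + 3 + y√2 = ±(1+√2)^(2r+1)` for some integer `r`; equivalently, setting
`u = 2x+3`, the equation becomes `u² − 2y² = −1`, whose integer solutions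
`(u, y)` are exactly those with `u + y√2 = ±(1+√2)^(2r+1)`. -/
theorem two_consecutive_squares_eq_square :
    (∀ x y : ℤ, (x + 1) ^ 2 + (x + 2) ^ 2 = y ^ 2 ↔
      ∃ r : ℤ, ((2 * x + 3 : ℤ) : ℝ) + (y : ℝ) * Real.sqrt 2 =
          (1 + Real.sqrt 2) ^ (2 * r + 1) ∨
        ((2 * x + 3 : ℤ) : ℝ) + (y : ℝ) * Real.sqrt 2 =
          -((1 + Real.sqrt 2) ^ (2 * r + 1))) ∧
    (∀ u y : ℤ, u ^ 2 - 2 * y ^ 2 = -1 ↔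
      ∃ r : ℤ, (u : ℝ) + (y : ℝ) * Real.sqrt 2 = (1 + Real.sqrt 2) ^ (2 * r + 1) ∨
        (u : ℝ) + (y : ℝ) * Real.sqrt 2 = -((1 + Real.sqrt 2) ^ (2 * r + 1))) := by
  constructor
  · intro x y
    rw [← pell_neg_classify (2 * x + 3) y]
    constructor
    · intro h; linear_combination 2 * h
    · intro h
      have h2 : 2 * ((x + 1) ^ 2 + (x + 2) ^ 2) = 2 * y ^ 2 := by linear_combination h
      exact mul_left_cancel₀ two_ne_zero h2
  · exact pell_neg_classify
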